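/- Let X and Y be Banach spaces, C ⊆ Y a closed convex pointed cone with nonempty interior, f : X → Y, x̄ an efficient solution of (X, f), and k⁰ ∈ int C. Then for each n ≥ 1 the perturbed problem (X, fₙ) with fₙ(x) = f(x) + (1/n)‖x − x̄‖·k⁰ is Dentcheva–Helbig well-posed at x̄, i.e., inf_{α>0} diam{x : fₙ(x) ∈ fₙ(x̄) + αc − C} = 0 for every c ∈ C. -/

import Mathlib

/-- If `xbar` is efficient for `(X, f)` and `k0 ∈ int C`, then for every `n ≥ 1`
the perturbed problem `(X, fₙ)` with `fₙ x = f x + (1/n)‖x - xbar‖ • k0` is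
Dentcheva–Helbig well-posed at `xbar`. -/
theorem perturbed_DH_wellposed
    {X Y : Type*} [NormedAddCommGroup X] [NormedSpace ℝ X] [CompleteSpace X]
    [NormedAddCommGroup Y] [NormedSpace ℝ Y] [CompleteSpace Y]
    (C : Set Y) (hCclosed : IsClosed C) (hCconv : Convex ℝ C)
    (hCcone : ∀ t : ℝ, 0 ≤ t → ∀ y ∈ C, t • y ∈ C)
    (hCpointed : C ∩ (-C) = {0}) (hCint : (interior C).Nonempty)
    (f : X → Y) (xbar : X)
    (heff : {y | ∃ x, y = f x - f xbar} ∩ (-C) = {0})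
    (k0 : Y) (hk0 : k0 ∈ interior C) (n : ℕ) (hn : 1 ≤ n) :
    ∀ c ∈ C, sInf ((fun α : ℝ => Metric.diam
      {x : X | (f xbar + ((1 / (n : ℝ)) * ‖xbar - xbar‖) • k0) + α • c
          - (f x + ((1 / (n : ℝ)) * ‖x - xbar‖) • k0) ∈ C}) '' Set.Ioi (0 : ℝ)) = 0 := by
  intro c hc
  rcases subsingleton_or_nontrivial Y with hY | hY
  · -- degenerate case: Y is a subsingleton, every level set is all of X
    have hall : ∀ α ∈ Set.Ioi (0:ℝ), Metric.diam
        {x : X | (f xbar + ((1 / (n : ℝ)) * ‖xbar - xbar‖) • k0) + α • c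
          - (f x + ((1 / (n : ℝ)) * ‖x - xbar‖) • k0) ∈ C} = 0 := by
      intro α hα
      have hset : {x : X | (f xbar + ((1 / (n : ℝ)) * ‖xbar - xbar‖) • k0) + α • c
          - (f x + ((1 / (n : ℝ)) * ‖x - xbar‖) • k0) ∈ C} = Set.univ := by
        ext x
        simp only [Set.mem_setOf_eq, Set.mem_univ, iff_true]
        have hek : (f xbar + ((1 / (n : ℝ)) * ‖xbar - xbar‖) • k0) + α • c
          - (f x + ((1 / (n : ℝ)) * ‖x - xbar‖) • k0) = k0 := Subsingleton.elim _ _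
        rw [hek]
        exact interior_subset hk0
      rw [hset]
      rcases subsingleton_or_nontrivial X with hX | hX
      · exact Metric.diam_subsingleton (Set.subsingleton_univ)
      · apply Metric.diam_eq_zero_of_unbounded
        intro hb
        obtain ⟨R, hR⟩ := hb.subset_ball (0:X)
        obtain ⟨x, hx⟩ := NormedSpace.exists_lt_norm ℝ X R
        have := hR (Set.mem_univ x)
        rw [Metric.mem_ball, dist_zero_right] at this
        linarith
    have himg : (fun α : ℝ => Metric.diam
        {x : X | (f xbar + ((1 / (n : ℝ)) * ‖xbar - xbar‖) • k0) + α • c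
          - (f x + ((1 / (n : ℝ)) * ‖x - xbar‖) • k0) ∈ C}) '' Set.Ioi (0:ℝ)
        = {(0:ℝ)} := by
      apply Set.eq_singleton_iff_nonempty_unique_mem.mpr
      refine ⟨⟨0, 1, Set.mem_Ioi.mpr one_pos, hall 1 (Set.mem_Ioi.mpr one_pos)⟩, ?_⟩
      rintro y ⟨α, hα, rfl⟩
      exact hall α hα
    rw [himg, csInf_singleton]
  · -- main case: Y nontrivial
    have hn0 : (0:ℝ) < (n:ℝ) := by exact_mod_cast hn
    -- addition closure of C
    have hadd : ∀ a ∈ C, ∀ b ∈ C, a + b ∈ C := by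
      intro a ha b hb
      have hmid := hCconv ha hb (by norm_num : (0:ℝ) ≤ 1/2) (by norm_num : (0:ℝ) ≤ 1/2)
        (by norm_num)
      have h2 := hCcone 2 (by norm_num) _ hmid
      have : (2:ℝ) • ((1/2:ℝ) • a + (1/2:ℝ) • b) = a + b := by
        rw [smul_add, smul_smul, smul_smul]; norm_num
      rwa [this] at h2
    obtain ⟨ε, hεpos, hball⟩ : ∃ ε > 0, Metric.ball k0 ε ⊆ C := by
      rcases Metric.mem_nhds_iff.mp (mem_interior_iff_mem_nhds.mp hk0) with ⟨ε, hε, hsub⟩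
      exact ⟨ε, hε, hsub⟩
    set B : ℝ := (n:ℝ) * ‖c‖ / ε with hB
    have hBnn : 0 ≤ B := by positivity
    -- key bound
    have key : ∀ α : ℝ, 0 < α → ∀ x : X,
        (f xbar + ((1 / (n : ℝ)) * ‖xbar - xbar‖) • k0) + α • c
          - (f x + ((1 / (n : ℝ)) * ‖x - xbar‖) • k0) ∈ C → ‖x - xbar‖ ≤ α * B := by
      intro α hα x hx
      by_contra hgt
      push_neg at hgt
      set t : ℝ := (1 / (n:ℝ)) * ‖x - xbar‖ with ht
      have hxnorm : 0 < ‖x - xbar‖ := lt_of_le_of_lt (by positivity) hgt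
      have htpos : 0 < t := by positivity
      have hlt : α * ‖c‖ < t * ε := by
        have h1 : α * ((n:ℝ) * ‖c‖) < ‖x - xbar‖ * ε := by
          have h0 : α * B * ε < ‖x - xbar‖ * ε := by nlinarith
          have h2 : α * B * ε = α * ((n:ℝ) * ‖c‖) := by
            rw [hB]; field_simp
          rw [h2] at h0
          exact h0
        rw [ht]
        have h3 : (1 / (n:ℝ) * ‖x - xbar‖) * ε = (‖x - xbar‖ * ε) / n := by ring
        rw [h3, lt_div_iff₀ hn0]
        nlinarith
      have hA : t • k0 - α • c ∈ C := by
        have hmem : k0 - (α / t) • c ∈ Metric.ball k0 ε := by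
          rw [Metric.mem_ball, dist_eq_norm]
          have heq : k0 - (α / t) • c - k0 = -((α / t) • c) := by abel
          rw [heq, norm_neg, norm_smul, Real.norm_of_nonneg (by positivity)]
          rw [div_mul_eq_mul_div, div_lt_iff₀ htpos]
          linarith
        have h := hCcone t htpos.le _ (hball hmem)
        have heq2 : t • (k0 - (α / t) • c) = t • k0 - α • c := by
          rw [smul_sub, smul_smul]
          congr 1
          rw [mul_div_assoc']
          rw [mul_comm, mul_div_assoc, div_self htpos.ne', mul_one]
        rwa [heq2] at h
      have hx' : f xbar + α • c - (f x + t • k0) ∈ C := by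
        have h := hx
        simp only [sub_self, norm_zero, mul_zero, zero_smul, add_zero] at h
        exact h
      have hsum : f xbar - f x ∈ C := by
        have h := hadd _ hx' _ hA
        have heq3 : f xbar + α • c - (f x + t • k0) + (t • k0 - α • c) = f xbar - f x := by
          abel
        rwa [heq3] at h
      have hfeq : f x = f xbar := by
        have h1 : f x - f xbar ∈ {y | ∃ x, y = f x - f xbar} ∩ (-C) := by
          refine ⟨⟨x, rfl⟩, ?_⟩
          rw [Set.mem_neg, neg_sub]
          exact hsum
        rw [heff] at h1
        exact sub_eq_zero.mp h1
      have hC1 : α • c - t • k0 ∈ C := by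
        have h := hx'
        rw [hfeq] at h
        have heq4 : f xbar + α • c - (f xbar + t • k0) = α • c - t • k0 := by abel
        rwa [heq4] at h
      have htk : t • k0 = α • c := by
        have h : t • k0 - α • c ∈ C ∩ (-C) := by
          refine ⟨hA, ?_⟩
          rw [Set.mem_neg, neg_sub]
          exact hC1
        rw [hCpointed] at h
        exact sub_eq_zero.mp h
      have hk0eq : k0 = (α / t) • c := by
        have h : (1/t) • (t • k0) = (1/t) • (α • c) := by rw [htk]
        rw [smul_smul, smul_smul, one_div_mul_cancel htpos.ne', one_smul] at h
        rw [h, one_div, ← div_eq_inv_mul]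
      have hk0small : ‖k0‖ < ε := by
        rw [hk0eq, norm_smul, Real.norm_of_nonneg (by positivity)]
        rw [div_mul_eq_mul_div, div_lt_iff₀ htpos]
        linarith
      obtain ⟨y, hy⟩ := exists_ne (0 : Y)
      have hy' : 0 < ‖y‖ := norm_pos_iff.mpr hy
      set δ : ℝ := ε - ‖k0‖ with hδdef
      have hδ : 0 < δ := by rw [hδdef]; linarith
      have hball0 : ∀ w : Y, ‖w‖ < δ → w ∈ C := by
        intro w hw
        apply hball
        rw [Metric.mem_ball, dist_eq_norm]
        calc ‖w - k0‖ ≤ ‖w‖ + ‖k0‖ := norm_sub_le _ _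
          _ < ε := by rw [hδdef] at hw; linarith
      set z : Y := (δ / (2 * ‖y‖)) • y with hz
      have hzne : z ≠ 0 := smul_ne_zero (by positivity) hy
      have hznorm : ‖z‖ < δ := by
        rw [hz, norm_smul, Real.norm_of_nonneg (by positivity)]
        rw [div_mul_eq_mul_div]
        rw [div_lt_iff₀ (by positivity)]
        nlinarith
      have hzmem : z ∈ C ∩ (-C) := by
        refine ⟨hball0 z hznorm, ?_⟩
        rw [Set.mem_neg]
        exact hball0 (-z) (by rw [norm_neg]; exact hznorm)
      rw [hCpointed] at hzmem
      exact hzne hzmem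
    -- now conclude about the infimum
    have hnonneg : ∀ y ∈ (fun α : ℝ => Metric.diam
        {x : X | (f xbar + ((1 / (n : ℝ)) * ‖xbar - xbar‖) • k0) + α • c
          - (f x + ((1 / (n : ℝ)) * ‖x - xbar‖) • k0) ∈ C}) '' Set.Ioi (0:ℝ), 0 ≤ y := by
      rintro y ⟨α, hα, rfl⟩
      exact Metric.diam_nonneg
    have hbdd : BddBelow ((fun α : ℝ => Metric.diam
        {x : X | (f xbar + ((1 / (n : ℝ)) * ‖xbar - xbar‖) • k0) + α • c
          - (f x + ((1 / (n : ℝ)) * ‖x - xbar‖) • k0) ∈ C}) '' Set.Ioi (0:ℝ)) :=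
      ⟨0, fun y hy => hnonneg y hy⟩
    refine le_antisymm ?_ (Real.sInf_nonneg hnonneg)
    have hle : ∀ ε' : ℝ, 0 < ε' → sInf ((fun α : ℝ => Metric.diam
        {x : X | (f xbar + ((1 / (n : ℝ)) * ‖xbar - xbar‖) • k0) + α • c
          - (f x + ((1 / (n : ℝ)) * ‖x - xbar‖) • k0) ∈ C}) '' Set.Ioi (0:ℝ)) ≤ 0 + ε' := by
      intro ε' hε'
      set α : ℝ := ε' / (2 * (B + 1)) with hαdef
      have hαpos : 0 < α := by positivity
      have hdiam : Metric.diam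
          {x : X | (f xbar + ((1 / (n : ℝ)) * ‖xbar - xbar‖) • k0) + α • c
            - (f x + ((1 / (n : ℝ)) * ‖x - xbar‖) • k0) ∈ C} ≤ 2 * (α * B) := by
        apply Metric.diam_le_of_forall_dist_le (by positivity)
        intro x hx x' hx'
        calc dist x x' ≤ dist x xbar + dist xbar x' := dist_triangle _ _ _
          _ = ‖x - xbar‖ + ‖x' - xbar‖ := by
            rw [dist_eq_norm, dist_comm, dist_eq_norm]
          _ ≤ α * B + α * B := add_le_add (key α hαpos x hx) (key α hαpos x' hx')
          _ = 2 * (α * B) := by ring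
      have h4 : sInf ((fun α : ℝ => Metric.diam
          {x : X | (f xbar + ((1 / (n : ℝ)) * ‖xbar - xbar‖) • k0) + α • c
            - (f x + ((1 / (n : ℝ)) * ‖x - xbar‖) • k0) ∈ C}) '' Set.Ioi (0:ℝ))
          ≤ Metric.diam
          {x : X | (f xbar + ((1 / (n : ℝ)) * ‖xbar - xbar‖) • k0) + α • c
            - (f x + ((1 / (n : ℝ)) * ‖x - xbar‖) • k0) ∈ C} :=
        csInf_le hbdd ⟨α, Set.mem_Ioi.mpr hαpos, rfl⟩
      have h5 : 2 * (α * B) ≤ 0 + ε' := by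
        have h6 : α * (B + 1) = ε' / 2 := by
          rw [hαdef]; field_simp
        nlinarith
      linarith
    exact le_of_forall_pos_le_add hle
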